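/- Let N ≥ 1, let G be a closed subgroup of U_N with Haar probability measure μ, let k ≥ 1, and let e = (e_1,…,e_k) be a word with letters in {∘,•}. Let Fix_e(G) = {ξ : {1,…,N}^k → ℂ : g^{⊗e} ξ = ξ for all g ∈ G}, let (ξ_π)_{π∈D} be a finite basis of Fix_e(G), and let G_{kN} be the Gram matrix G_{kN}(π,σ) = ⟨ξ_π, ξ_σ⟩ = Σ_{j∈{1,…,N}^k} conj(ξ_π(j)) ξ_σ(j). Then G_{kN} is invertible, and with W_{kN} = G_{kN}^{-1}, for all multi-indices i, j ∈ {1,…,N}^k one has ∫_G ∏_{a=1}^k g_{i_a j_a}^{e_a} dμ(g) = Σ_{π,σ∈D} ξ_π(i) conj(ξ_σ(j)) W_{kN}(π,σ). -/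

import Mathlib

open Matrix MeasureTheory

/-- `x^∘ = x` and `x^• = conj x`, for a scalar `x` (here `true` encodes `•`). -/
noncomputable def dec (b : Bool) (z : ℂ) : ℂ := if b then (starRingEnd ℂ) z else z

/-- The decorated tensor power `g^{⊗e}` of a matrix `g ∈ M_N(ℂ)`, for a word `e` with letters
in `{∘,•}` (here `true` encodes `•`): the matrix with entries `∏_a g_{i_a j_a}^{e_a}`. -/
noncomputable def decPow {N k : ℕ} (e : Fin k → Bool) (g : Matrix (Fin N) (Fin N) ℂ) :
    Matrix (Fin k → Fin N) (Fin k → Fin N) ℂ :=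
  Matrix.of fun i j => ∏ a, dec (e a) (g (i a) (j a))

/-- The space `Fix_e(G)` of vectors `ξ : {1,…,N}^k → ℂ` with `g^{⊗e} ξ = ξ` for all `g ∈ G`. -/
noncomputable def FixE {N k : ℕ} (G : Subgroup (Matrix.unitaryGroup (Fin N) ℂ))
    (e : Fin k → Bool) : Submodule ℂ ((Fin k → Fin N) → ℂ) where
  carrier := {ξ | ∀ g ∈ G, decPow e (g : Matrix (Fin N) (Fin N) ℂ) *ᵥ ξ = ξ}
  add_mem' := by
    intro a b ha hb g hg
    rw [Matrix.mulVec_add, ha g hg, hb g hg]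
  zero_mem' := by
    intro g hg
    rw [Matrix.mulVec_zero]
  smul_mem' := by
    intro c a ha g hg
    rw [Matrix.mulVec_smul, ha g hg]

/-- We equip a closed subgroup `G ⊆ U_N` with its Borel σ-algebra. -/
noncomputable instance instMeasSubgroupUG {N : ℕ} (G : Subgroup (Matrix.unitaryGroup (Fin N) ℂ)) :
    MeasurableSpace G := borel G

instance instBorelSubgroupUG {N : ℕ} (G : Subgroup (Matrix.unitaryGroup (Fin N) ℂ)) :
    BorelSpace G := ⟨rfl⟩

/-! ### Auxiliary lemmas -/

section Aux

lemma dec_conj (b : Bool) (z : ℂ) : dec b ((starRingEnd ℂ) z) = (starRingEnd ℂ) (dec b z) := by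
  cases b <;> simp [dec]

lemma dec_mul (b : Bool) (x y : ℂ) : dec b (x * y) = dec b x * dec b y := by
  cases b <;> simp [dec]

lemma dec_sum {ι : Type*} (b : Bool) (s : Finset ι) (f : ι → ℂ) :
    dec b (∑ i ∈ s, f i) = ∑ i ∈ s, dec b (f i) := by
  cases b <;> simp [dec]

lemma dec_continuous (b : Bool) : Continuous (dec b) := by
  cases b
  · exact (continuous_id : Continuous fun z : ℂ => z).congr (fun z => by simp [dec])
  · exact Complex.continuous_conj.congr (fun z => by simp [dec])

lemma decPow_mul {N k : ℕ} (e : Fin k → Bool) (g h : Matrix (Fin N) (Fin N) ℂ) :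
    decPow e (g * h) = decPow e g * decPow e h := by
  ext i j
  simp only [decPow, Matrix.of_apply, Matrix.mul_apply]
  have h1 : ∀ a : Fin k, dec (e a) (∑ m, g (i a) m * h m (j a))
      = ∑ m : Fin N, dec (e a) (g (i a) m) * dec (e a) (h m (j a)) := by
    intro a
    rw [dec_sum]
    exact Finset.sum_congr rfl fun m _ => dec_mul _ _ _
  rw [Finset.prod_congr rfl fun a _ => h1 a, Finset.prod_univ_sum]
  simp [Finset.prod_mul_distrib]

/-- The coercion of `u⁻¹` for a unitary matrix is the entrywise conjugate transpose. -/
lemma unitary_inv_apply {N : ℕ} (u : Matrix.unitaryGroup (Fin N) ℂ) (p q : Fin N) :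
    ((u⁻¹ : Matrix.unitaryGroup (Fin N) ℂ) : Matrix (Fin N) (Fin N) ℂ) p q
      = (starRingEnd ℂ) ((u : Matrix (Fin N) (Fin N) ℂ) q p) := by
  have : ((u⁻¹ : Matrix.unitaryGroup (Fin N) ℂ) : Matrix (Fin N) (Fin N) ℂ)
      = star (u : Matrix (Fin N) (Fin N) ℂ) := rfl
  rw [this, Matrix.star_apply]
  rfl

/-- Key pairing identity: pairing a fixed vector against the decorated tensor power. -/
lemma pairing {N k : ℕ} (e : Fin k → Bool) (u : Matrix.unitaryGroup (Fin N) ℂ)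
    (ξ0 : (Fin k → Fin N) → ℂ)
    (hfix : decPow e ((u⁻¹ : Matrix.unitaryGroup (Fin N) ℂ) : Matrix (Fin N) (Fin N) ℂ) *ᵥ ξ0 = ξ0)
    (j : Fin k → Fin N) :
    ∑ i : Fin k → Fin N, (starRingEnd ℂ) (ξ0 i)
        * decPow e (u : Matrix (Fin N) (Fin N) ℂ) i j = (starRingEnd ℂ) (ξ0 j) := by
  have h1 : ∀ i, (starRingEnd ℂ) (decPow e (u : Matrix (Fin N) (Fin N) ℂ) i j)
      = decPow e ((u⁻¹ : Matrix.unitaryGroup (Fin N) ℂ) : Matrix (Fin N) (Fin N) ℂ) j i := by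
    intro i
    simp only [decPow, Matrix.of_apply, map_prod]
    refine Finset.prod_congr rfl fun a _ => ?_
    rw [unitary_inv_apply, dec_conj]
  have h2 := congrFun hfix j
  simp only [Matrix.mulVec, dotProduct] at h2
  calc ∑ i : Fin k → Fin N, (starRingEnd ℂ) (ξ0 i)
        * decPow e (u : Matrix (Fin N) (Fin N) ℂ) i j
      = (starRingEnd ℂ) (∑ i : Fin k → Fin N, ξ0 i
          * (starRingEnd ℂ) (decPow e (u : Matrix (Fin N) (Fin N) ℂ) i j)) := by
        rw [map_sum]
        refine Finset.sum_congr rfl fun i _ => ?_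
        rw [_root_.map_mul, Complex.conj_conj]
    _ = (starRingEnd ℂ) (∑ i : Fin k → Fin N,
          decPow e ((u⁻¹ : Matrix.unitaryGroup (Fin N) ℂ) : Matrix (Fin N) (Fin N) ℂ) j i * ξ0 i) := by
        congr 1
        refine Finset.sum_congr rfl fun i _ => ?_
        rw [h1, mul_comm]
    _ = (starRingEnd ℂ) (ξ0 j) := by rw [h2]

instance unitary.instTopologicalGroup {M : Type*} [Monoid M] [StarMul M] [TopologicalSpace M]
    [ContinuousMul M] [ContinuousStar M] : IsTopologicalGroup (unitary M) where
  continuous_inv := continuous_induced_rng.mpr (continuous_star.comp continuous_subtype_val)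

lemma unitaryGroup_compact (N : ℕ) :
    IsCompact (Matrix.unitaryGroup (Fin N) ℂ : Set (Matrix (Fin N) (Fin N) ℂ)) := by
  have hK : IsCompact (Set.univ.pi fun _ : Fin N =>
      Set.univ.pi fun _ : Fin N => Metric.closedBall (0 : ℂ) 1) :=
    isCompact_univ_pi fun _ => isCompact_univ_pi fun _ => isCompact_closedBall _ _
  have hsub : (Matrix.unitaryGroup (Fin N) ℂ : Set (Matrix (Fin N) (Fin N) ℂ)) ⊆
      Set.univ.pi fun _ : Fin N => Set.univ.pi fun _ : Fin N => Metric.closedBall (0 : ℂ) 1 := by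
    intro M hM
    refine Set.mem_univ_pi.mpr ?_
    intro i
    rw [Set.mem_univ_pi]
    intro j
    simpa [Metric.mem_closedBall, dist_zero_right] using entry_norm_bound_of_unitary hM i j
  have hcl : IsClosed (Matrix.unitaryGroup (Fin N) ℂ : Set (Matrix (Fin N) (Fin N) ℂ)) := by
    have hset : (Matrix.unitaryGroup (Fin N) ℂ : Set (Matrix (Fin N) (Fin N) ℂ))
        = {M | star M * M = 1} ∩ {M | M * star M = 1} := by
      ext M
      exact Unitary.mem_iff
    rw [hset]
    exact (isClosed_eq (continuous_star.matrix_mul continuous_id) continuous_const).inter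
      (isClosed_eq (continuous_id.matrix_mul continuous_star) continuous_const)
  exact hK.of_isClosed_subset hcl hsub

end Aux

/-- The Weingarten integration formula for a closed subgroup `G ⊆ U_N` with Haar probability
measure `μ`: given a basis `(ξ_π)_{π ∈ D}` of `Fix_e(G)`, the Gram matrix
`G_{kN}(π,σ) = ⟨ξ_π, ξ_σ⟩` is invertible, and with `W_{kN} = G_{kN}⁻¹`,
`∫_G ∏_a g_{i_a j_a}^{e_a} dμ = Σ_{π,σ} ξ_π(i) conj(ξ_σ(j)) W_{kN}(π,σ)`. -/
theorem stmt4 (N : ℕ) (hN : 1 ≤ N) (G : Subgroup (Matrix.unitaryGroup (Fin N) ℂ))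
    (hG : IsClosed (G : Set (Matrix.unitaryGroup (Fin N) ℂ)))
    (μ : Measure G) [IsProbabilityMeasure μ]
    [μ.IsMulLeftInvariant] [μ.IsMulRightInvariant]
    (k : ℕ) (hk : 1 ≤ k) (e : Fin k → Bool)
    (D : Type*) [Fintype D] [DecidableEq D]
    (ξ : D → ((Fin k → Fin N) → ℂ))
    (hmem : ∀ π, ξ π ∈ FixE G e)
    (hind : LinearIndependent ℂ ξ)
    (hspan : Submodule.span ℂ (Set.range ξ) = FixE G e)
    (Gm : Matrix D D ℂ)
    (hGm : ∀ π σ, Gm π σ = ∑ j : Fin k → Fin N, (starRingEnd ℂ) (ξ π j) * ξ σ j) :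
    IsUnit Gm ∧
    ∀ i j : Fin k → Fin N,
      (∫ g : G, ∏ a, dec (e a)
          (((g : Matrix.unitaryGroup (Fin N) ℂ) : Matrix (Fin N) (Fin N) ℂ) (i a) (j a)) ∂μ) =
        ∑ π : D, ∑ σ : D, ξ π i * (starRingEnd ℂ) (ξ σ j) * Gm⁻¹ π σ := by
  classical
  haveI : CompactSpace (Matrix.unitaryGroup (Fin N) ℂ) :=
    isCompact_iff_compactSpace.mp (unitaryGroup_compact N)
  haveI : CompactSpace G := isCompact_iff_compactSpace.mp hG.isCompact
  -- the integrand family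
  set F : (Fin k → Fin N) → (Fin k → Fin N) → G → ℂ := fun i j g =>
    decPow e (((g : Matrix.unitaryGroup (Fin N) ℂ) : Matrix (Fin N) (Fin N) ℂ)) i j with hF
  have hFc : ∀ i j, Continuous (F i j) := by
    intro i j
    have hFe : F i j = fun g : G => ∏ a, dec (e a)
        (((g : Matrix.unitaryGroup (Fin N) ℂ) : Matrix (Fin N) (Fin N) ℂ) (i a) (j a)) := rfl
    rw [hFe]
    apply continuous_finset_prod
    intro a _
    exact (dec_continuous (e a)).comp ((continuous_apply (j a)).comp
      ((continuous_apply (i a)).comp (continuous_subtype_val.comp continuous_subtype_val : Continuous fun g : G =>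
        ((g : Matrix.unitaryGroup (Fin N) ℂ) : Matrix (Fin N) (Fin N) ℂ))))
  have hFi : ∀ i j, Integrable (F i j) μ := by
    intro i j
    exact (hFc i j).integrable_of_hasCompactSupport
      (isCompact_univ.of_isClosed_subset (isClosed_tsupport _) (Set.subset_univ _))
  set P : (Fin k → Fin N) → (Fin k → Fin N) → ℂ := fun i j => ∫ g : G, F i j g ∂μ with hP
  -- Step 1: the columns of P lie in FixE G e
  have hcol : ∀ jj : Fin k → Fin N, (fun ii => P ii jj) ∈ FixE G e := by
    intro jj u hu
    set g₀ : G := ⟨u, hu⟩ with hg₀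
    funext ii
    have e1 : (decPow e (u : Matrix (Fin N) (Fin N) ℂ) *ᵥ fun m => P m jj) ii
        = ∑ m : Fin k → Fin N, decPow e (u : Matrix (Fin N) (Fin N) ℂ) ii m * P m jj := by
      simp [Matrix.mulVec, dotProduct]
    rw [e1]
    have e2 : ∀ m : Fin k → Fin N, decPow e (u : Matrix (Fin N) (Fin N) ℂ) ii m * P m jj
        = ∫ g : G, decPow e (u : Matrix (Fin N) (Fin N) ℂ) ii m * F m jj g ∂μ := by
      intro m
      rw [hP, integral_const_mul]
    rw [Finset.sum_congr rfl fun m _ => e2 m,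
      ← integral_finset_sum _ (fun m _ => ((hFi m jj).const_mul _))]
    have e3 : ∀ g : G, (∑ m : Fin k → Fin N,
        decPow e (u : Matrix (Fin N) (Fin N) ℂ) ii m * F m jj g) = F ii jj (g₀ * g) := by
      intro g
      have : F ii jj (g₀ * g) = decPow e ((u : Matrix (Fin N) (Fin N) ℂ)
          * ((g : Matrix.unitaryGroup (Fin N) ℂ) : Matrix (Fin N) (Fin N) ℂ)) ii jj := by
        simp [hF, hg₀]
      rw [this, decPow_mul, Matrix.mul_apply]
    rw [integral_congr_ae (Filter.Eventually.of_forall e3),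
      integral_mul_left_eq_self (F ii jj) g₀]
  -- Step 2: coefficients C
  have hcolspan : ∀ jj : Fin k → Fin N, ∃ c : D → ℂ,
      ∑ π, c π • ξ π = fun ii => P ii jj := by
    intro jj
    have h := hcol jj
    rw [← hspan] at h
    exact (Submodule.mem_span_range_iff_exists_fun ℂ).mp h
  choose C hC using hcolspan
  have hCP : ∀ (jj ii : Fin k → Fin N), ∑ π, C jj π * ξ π ii = P ii jj := by
    intro jj ii
    have := congrFun (hC jj) ii
    simpa [Finset.sum_apply] using this
  -- Step 3: Gm * C = conjugates of ξ
  have hGmC : ∀ (π : D) (jj : Fin k → Fin N),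
      ∑ σ, Gm π σ * C jj σ = (starRingEnd ℂ) (ξ π jj) := by
    intro π jj
    have h1 : ∑ σ, Gm π σ * C jj σ
        = ∑ ii : Fin k → Fin N, (starRingEnd ℂ) (ξ π ii) * P ii jj := by
      simp only [hGm, Finset.sum_mul]
      rw [Finset.sum_comm]
      refine Finset.sum_congr rfl fun ii _ => ?_
      rw [← hCP jj ii, Finset.mul_sum]
      refine Finset.sum_congr rfl fun σ _ => ?_
      ring
    have h2 : ∑ ii : Fin k → Fin N, (starRingEnd ℂ) (ξ π ii) * P ii jj
        = ∫ g : G, ∑ ii : Fin k → Fin N, (starRingEnd ℂ) (ξ π ii) * F ii jj g ∂μ := by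
      rw [integral_finset_sum _ (fun ii _ => ((hFi ii jj).const_mul _))]
      refine Finset.sum_congr rfl fun ii _ => ?_
      rw [hP, integral_const_mul]
    have h3 : ∀ g : G, ∑ ii : Fin k → Fin N, (starRingEnd ℂ) (ξ π ii) * F ii jj g
        = (starRingEnd ℂ) (ξ π jj) := by
      intro g
      refine pairing e (g : Matrix.unitaryGroup (Fin N) ℂ) (ξ π) ?_ jj
      have hinv : ((g : Matrix.unitaryGroup (Fin N) ℂ))⁻¹ ∈ G := by
        simpa using G.inv_mem g.2
      exact hmem π _ hinv
    rw [h1, h2, integral_congr_ae (Filter.Eventually.of_forall h3), integral_const]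
    simp
  -- Step 4: invertibility of Gm
  have hunit : IsUnit Gm := by
    rw [Matrix.isUnit_iff_isUnit_det, isUnit_iff_ne_zero]
    intro hdet
    obtain ⟨v, hv0, hv⟩ := Matrix.exists_mulVec_eq_zero_iff.mpr hdet
    set w : (Fin k → Fin N) → ℂ := fun ii => ∑ σ, v σ * ξ σ ii with hw
    have hw0 : ∑ ii : Fin k → Fin N, (starRingEnd ℂ) (w ii) * w ii = 0 := by
      have : ∑ ii : Fin k → Fin N, (starRingEnd ℂ) (w ii) * w ii
          = ∑ π, (starRingEnd ℂ) (v π) * (Gm *ᵥ v) π := by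
        simp only [hw, Matrix.mulVec, dotProduct, hGm, map_sum, _root_.map_mul,
          Finset.mul_sum, Finset.sum_mul]
        conv_rhs => rw [Finset.sum_comm]
        rw [Finset.sum_comm]
        refine Finset.sum_congr rfl fun π _ => ?_
        rw [Finset.sum_comm]
        refine Finset.sum_congr rfl fun σ _ => ?_
        refine Finset.sum_congr rfl fun ii _ => ?_
        ring
      rw [this, hv]
      simp
    have hwz : ∀ ii, w ii = 0 := by
      have hre : ∑ ii : Fin k → Fin N, (Complex.normSq (w ii) : ℂ) = 0 := by
        rw [← hw0]
        refine Finset.sum_congr rfl fun ii _ => ?_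
        rw [← Complex.normSq_eq_conj_mul_self]
      have hre' : ∑ ii : Fin k → Fin N, Complex.normSq (w ii) = 0 := by
        have := hre
        push_cast at this
        exact_mod_cast this
      intro ii
      have := (Finset.sum_eq_zero_iff_of_nonneg
        (fun ii _ => Complex.normSq_nonneg (w ii))).mp hre' ii (Finset.mem_univ ii)
      exact Complex.normSq_eq_zero.mp this
    have hvz : ∀ π, v π = 0 := by
      apply Fintype.linearIndependent_iff.mp hind
      funext ii
      simpa [Finset.sum_apply, hw] using hwz ii
    exact hv0 (funext hvz)
  refine ⟨hunit, ?_⟩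
  -- Step 5: the formula
  have hdet : IsUnit Gm.det := (Matrix.isUnit_iff_isUnit_det Gm).mp hunit
  have hCval : ∀ (jj : Fin k → Fin N) (π : D),
      C jj π = ∑ σ, Gm⁻¹ π σ * (starRingEnd ℂ) (ξ σ jj) := by
    intro jj π
    have h1 : Gm *ᵥ (C jj) = fun π => (starRingEnd ℂ) (ξ π jj) := by
      funext τ
      simpa [Matrix.mulVec, dotProduct] using hGmC τ jj
    have h2 := congrArg (fun x => Gm⁻¹ *ᵥ x) h1
    simp only [Matrix.mulVec_mulVec, Matrix.nonsing_inv_mul Gm hdet,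
      Matrix.one_mulVec] at h2
    have := congrFun h2 π
    simpa [Matrix.mulVec, dotProduct] using this
  intro i j
  have hgoal : (∫ g : G, ∏ a, dec (e a)
      (((g : Matrix.unitaryGroup (Fin N) ℂ) : Matrix (Fin N) (Fin N) ℂ) (i a) (j a)) ∂μ)
      = P i j := rfl
  rw [hgoal, ← hCP j i]
  rw [Finset.sum_congr rfl fun π _ => by rw [hCval j π]]
  refine Finset.sum_congr rfl fun π _ => ?_
  rw [Finset.sum_mul]
  refine Finset.sum_congr rfl fun σ _ => ?_
  ring
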